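/- Let R be a 2×2 matrix of natural numbers which is not one of the four matrices [[4,2],[2,2]], [[4,2],[2,1]], [[3,2],[2,2]], [[3,2],[2,1]]. Then either for every x ∈ GL₆(𝕂) with rank matrix R(x) = R one has x·x_left ∉ Lie(P)·x + x·Lie(P)^τ, or for every x ∈ GL₆(𝕂) with R(x) = R one has x_right·x ∉ Lie(P)·x + x·Lie(P)^τ. -/

import Mathlib

open Matrix

/-- The Lie algebra of the parabolic `P ⊆ GL₆(𝕂)`: block upper triangular `6 × 6`
matrices with respect to the partition `(2,2,2)` of `6`. -/
def LieP (𝕂 : Type*) [RCLike 𝕂] : Set (Matrix (Fin 6) (Fin 6) 𝕂) :=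
  {p | ∀ i j : Fin 6, (j : ℕ) / 2 < (i : ℕ) / 2 → p i j = 0}

/-- `Lie(P)^τ`, the image of `Lie(P)` under matrix transpose. -/
def LiePtau (𝕂 : Type*) [RCLike 𝕂] : Set (Matrix (Fin 6) (Fin 6) 𝕂) :=
  {q | qᵀ ∈ LieP 𝕂}

/-- The block matrix `x_left = [[0,I₂,0],[0,0,I₂],[0,0,0]]` (2×2 blocks). -/
def xLeft (𝕂 : Type*) [RCLike 𝕂] : Matrix (Fin 6) (Fin 6) 𝕂 :=
  Matrix.of fun i j => if (j : ℕ) = (i : ℕ) + 2 then 1 else 0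

/-- `x_right = x_left^τ`. -/
def xRight (𝕂 : Type*) [RCLike 𝕂] : Matrix (Fin 6) (Fin 6) 𝕂 := (xLeft 𝕂)ᵀ

/-- The set `Lie(P)·x + x·Lie(P)^τ = {p·x + x·q : p ∈ Lie(P), q ∈ Lie(P)^τ}`. -/
def tanSet {𝕂 : Type*} [RCLike 𝕂] (x : Matrix (Fin 6) (Fin 6) 𝕂) :
    Set (Matrix (Fin 6) (Fin 6) 𝕂) :=
  {m | ∃ p ∈ LieP 𝕂, ∃ q ∈ LiePtau 𝕂, m = p * x + x * q}

/-- The lower right `i × j` corner block of a `6 × 6` matrix. -/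
def corner {𝕂 : Type*} [RCLike 𝕂] (i j : ℕ) (hi : i ≤ 6) (hj : j ≤ 6)
    (x : Matrix (Fin 6) (Fin 6) 𝕂) : Matrix (Fin i) (Fin j) 𝕂 :=
  Matrix.of fun a b =>
    x ⟨6 - i + a.1, by have := a.2; omega⟩ ⟨6 - j + b.1, by have := b.2; omega⟩

/-- The rank matrix `R(x) = [[r₄ₓ₄(x), r₄ₓ₂(x)], [r₂ₓ₄(x), r₂ₓ₂(x)]]`, where
`r_{i×j}(x)` is the rank of the lower right `i × j` corner block of `x`. -/
noncomputable def rankMatrix {𝕂 : Type*} [RCLike 𝕂] (x : Matrix (Fin 6) (Fin 6) 𝕂) :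
    Matrix (Fin 2) (Fin 2) ℕ :=
  !![(corner 4 4 (by norm_num) (by norm_num) x).rank,
     (corner 4 2 (by norm_num) (by norm_num) x).rank;
     (corner 2 4 (by norm_num) (by norm_num) x).rank,
     (corner 2 2 (by norm_num) (by norm_num) x).rank]

section Aux

variable {𝕂 : Type*} [RCLike 𝕂]


lemma rank_rows_le {m n l : Type*} [Fintype m] [Fintype n] [Fintype l]
    (A : Matrix m n 𝕂) (f : l → m) : (A.submatrix f id).rank ≤ A.rank := by
  rw [Matrix.rank, Matrix.rank,
    show A.submatrix f id = A.submatrix f (Equiv.refl n) from rfl,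
    Matrix.mulVecLin_submatrix]
  simp only [Equiv.refl_symm, Equiv.coe_refl, LinearMap.funLeft_id, LinearMap.comp_id]
  show Module.finrank 𝕂 (LinearMap.range (LinearMap.funLeft 𝕂 𝕂 f ∘ₗ A.mulVecLin)) ≤ _
  rw [LinearMap.range_comp]
  exact Submodule.finrank_map_le _ _

lemma rank_submatrix_le' {m n l o : Type*} [Fintype m] [Fintype n] [Fintype l] [Fintype o]
    (A : Matrix m n 𝕂) (f : l → m) (g : o → n) : (A.submatrix f g).rank ≤ A.rank := by
  have h1 : A.submatrix f g = ((A.submatrix f id)ᵀ.submatrix g id)ᵀ := by ext i j; rfl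
  calc (A.submatrix f g).rank = ((A.submatrix f id)ᵀ.submatrix g id).rank := by
        rw [h1, Matrix.rank_transpose]
    _ ≤ (A.submatrix f id)ᵀ.rank := rank_rows_le _ g
    _ = (A.submatrix f id).rank := Matrix.rank_transpose _
    _ ≤ A.rank := rank_rows_le _ f

lemma exists_mulVec_zero {m n : Type*} [Fintype m] [Fintype n]
    (A : Matrix m n 𝕂) (h : A.rank < Fintype.card n) : ∃ v, v ≠ 0 ∧ A.mulVec v = 0 := by
  have hrn := LinearMap.finrank_range_add_finrank_ker A.mulVecLin
  rw [Module.finrank_fintype_fun_eq_card] at hrn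
  have hker : LinearMap.ker A.mulVecLin ≠ ⊥ := by
    intro hbot
    rw [hbot, finrank_bot] at hrn
    rw [Matrix.rank] at h
    omega
  obtain ⟨v, hv, hv0⟩ := (Submodule.ne_bot_iff _).mp hker
  exact ⟨v, hv0, by simpa using hv⟩

lemma rank_lt_of_mulVec_zero {m n : Type*} [Fintype m] [Fintype n]
    (A : Matrix m n 𝕂) {v : n → 𝕂} (h0 : v ≠ 0) (h : A.mulVec v = 0) :
    A.rank < Fintype.card n := by
  have hrn := LinearMap.finrank_range_add_finrank_ker A.mulVecLin
  rw [Module.finrank_fintype_fun_eq_card] at hrn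
  have hker : LinearMap.ker A.mulVecLin ≠ ⊥ := by
    intro hbot
    have : v ∈ LinearMap.ker A.mulVecLin := by simpa using h
    rw [hbot] at this
    exact h0 (by simpa using this)
  have h1 : Module.finrank 𝕂 (LinearMap.ker A.mulVecLin) ≠ 0 := by
    rwa [ne_eq, Submodule.finrank_eq_zero]
  rw [Matrix.rank]
  omega

lemma exists_vecMul_zero {m n : Type*} [Fintype m] [Fintype n]
    (A : Matrix m n 𝕂) (h : A.rank < Fintype.card m) : ∃ u, u ≠ 0 ∧ Matrix.vecMul u A = 0 := by
  obtain ⟨v, hv0, hv⟩ := exists_mulVec_zero Aᵀ (by rwa [Matrix.rank_transpose])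
  exact ⟨v, hv0, by rwa [Matrix.mulVec_transpose] at hv⟩

lemma rank_lt_of_vecMul_zero {m n : Type*} [Fintype m] [Fintype n]
    (A : Matrix m n 𝕂) {u : m → 𝕂} (h0 : u ≠ 0) (h : Matrix.vecMul u A = 0) :
    A.rank < Fintype.card m := by
  rw [← Matrix.rank_transpose]
  exact rank_lt_of_mulVec_zero Aᵀ h0 (by rwa [Matrix.mulVec_transpose])

lemma sum_tail {i : ℕ} (hi : i ≤ 6) (f : Fin 6 → 𝕂)
    (hf : ∀ k : Fin 6, (k : ℕ) < 6 - i → f k = 0) :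
    ∑ k : Fin 6, f k = ∑ c : Fin i, f ⟨6 - i + c.1, by have := c.2; omega⟩ := by
  classical
  set e : Fin i → Fin 6 := fun c => ⟨6 - i + c.1, by have := c.2; omega⟩ with he
  have hinj : ∀ a ∈ (Finset.univ : Finset (Fin i)), ∀ b ∈ Finset.univ, e a = e b → a = b := by
    intro a _ b _ hab
    have : (e a).1 = (e b).1 := congrArg Fin.val hab
    simp only [he] at this
    exact Fin.ext (by omega)
  have h1 : ∑ c : Fin i, f (e c) = ∑ k ∈ Finset.univ.image e, f k :=
    (Finset.sum_image hinj).symm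
  rw [h1]
  refine (Finset.sum_subset (Finset.subset_univ _) ?_).symm
  intro k _ hk
  refine hf k ?_
  by_contra hlt
  refine hk (Finset.mem_image.mpr ⟨⟨k.1 - (6 - i), by have := k.2; omega⟩, Finset.mem_univ _, ?_⟩)
  refine Fin.ext ?_
  show 6 - i + (k.1 - (6 - i)) = k.1
  omega

lemma corner_mul_left {i j : ℕ} (hi : i ≤ 6) (hj : j ≤ 6) (h2 : 2 ∣ (6 - i))
    {p : Matrix (Fin 6) (Fin 6) 𝕂} (hp : p ∈ LieP 𝕂) (x : Matrix (Fin 6) (Fin 6) 𝕂) :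
    corner i j hi hj (p * x) = corner i i hi hi p * corner i j hi hj x := by
  ext a b
  have ha := a.2
  have hb := b.2
  show ∑ k : Fin 6, p ⟨6 - i + a.1, by omega⟩ k * x k ⟨6 - j + b.1, by omega⟩ = _
  rw [sum_tail hi _ (fun k hk => by
    rw [hp ⟨6 - i + a.1, by omega⟩ k
      (show (k : ℕ) / 2 < (6 - i + a.1) / 2 by obtain ⟨t, ht⟩ := h2; omega), zero_mul])]
  rfl

lemma corner_mul_right {i j : ℕ} (hi : i ≤ 6) (hj : j ≤ 6) (h2 : 2 ∣ (6 - j))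
    {q : Matrix (Fin 6) (Fin 6) 𝕂} (hq : q ∈ LiePtau 𝕂) (x : Matrix (Fin 6) (Fin 6) 𝕂) :
    corner i j hi hj (x * q) = corner i j hi hj x * corner j j hj hj q := by
  ext a b
  have ha := a.2
  have hb := b.2
  show ∑ k : Fin 6, x ⟨6 - i + a.1, by omega⟩ k * q k ⟨6 - j + b.1, by omega⟩ = _
  rw [sum_tail hj _ (fun k hk => by
    have h0 := hq ⟨6 - j + b.1, by omega⟩ k
      (show (k : ℕ) / 2 < (6 - j + b.1) / 2 by obtain ⟨t, ht⟩ := h2; omega)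
    rw [Matrix.transpose_apply] at h0
    rw [h0, mul_zero])]
  rfl

lemma pairing {x m : Matrix (Fin 6) (Fin 6) 𝕂} (hm : m ∈ tanSet x)
    {i j : ℕ} (hi : i ≤ 6) (hj : j ≤ 6) (h2i : 2 ∣ (6 - i)) (h2j : 2 ∣ (6 - j))
    (u : Fin i → 𝕂) (v : Fin j → 𝕂)
    (hu : Matrix.vecMul u (corner i j hi hj x) = 0)
    (hv : (corner i j hi hj x).mulVec v = 0) :
    u ⬝ᵥ (corner i j hi hj m).mulVec v = 0 := by
  obtain ⟨p, hp, q, hq, rfl⟩ := hm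
  have hadd : corner i j hi hj (p * x + x * q)
      = corner i i hi hi p * corner i j hi hj x + corner i j hi hj x * corner j j hj hj q := by
    rw [← corner_mul_left hi hj h2i hp x, ← corner_mul_right hi hj h2j hq x]
    ext a b
    rfl
  rw [hadd, Matrix.add_mulVec, dotProduct_add]
  rw [← Matrix.mulVec_mulVec, hv, Matrix.mulVec_zero, dotProduct_zero]
  rw [← Matrix.mulVec_mulVec, dotProduct_mulVec, hu, zero_dotProduct, add_zero]

lemma mul_xLeft_apply (x : Matrix (Fin 6) (Fin 6) 𝕂) (i j : Fin 6) (hj : 2 ≤ (j : ℕ)) :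
    (x * xLeft 𝕂) i j = x i ⟨j.1 - 2, by have := j.2; omega⟩ := by
  rw [Matrix.mul_apply]
  rw [Finset.sum_eq_single (⟨j.1 - 2, by have := j.2; omega⟩ : Fin 6)]
  · show x i _ * (if (j : ℕ) = (j.1 - 2) + 2 then (1 : 𝕂) else 0) = _
    rw [if_pos (by omega), mul_one]
  · intro k _ hk
    show x i k * (if (j : ℕ) = (k : ℕ) + 2 then (1 : 𝕂) else 0) = 0
    rw [if_neg fun h => hk (Fin.ext (show (k : ℕ) = j.1 - 2 by omega)), mul_zero]
  · intro h
    exact absurd (Finset.mem_univ _) h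

lemma mul_xLeft_apply' (x : Matrix (Fin 6) (Fin 6) 𝕂) (i j j' : Fin 6)
    (hj : (j : ℕ) = j'.1 + 2) : (x * xLeft 𝕂) i j = x i j' := by
  rw [mul_xLeft_apply _ _ _ (by omega)]
  congr 1
  exact Fin.ext (show j.1 - 2 = j'.1 by omega)

lemma entry_congr (x : Matrix (Fin 6) (Fin 6) 𝕂) {i i' j j' : Fin 6}
    (hi : i.1 = i'.1) (hj : j.1 = j'.1) : x i j = x i' j' := by
  rw [Fin.ext hi, Fin.ext hj]

lemma right_to_left {x : Matrix (Fin 6) (Fin 6) 𝕂} (h : xRight 𝕂 * x ∈ tanSet x) :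
    xᵀ * xLeft 𝕂 ∈ tanSet xᵀ := by
  obtain ⟨p, hp, q, hq, he⟩ := h
  refine ⟨qᵀ, hq, pᵀ, ?_, ?_⟩
  · show pᵀᵀ ∈ LieP 𝕂
    rwa [Matrix.transpose_transpose]
  · have h2 := congrArg Matrix.transpose he
    simp only [Matrix.transpose_mul, Matrix.transpose_add, xRight,
      Matrix.transpose_transpose] at h2
    rw [h2, add_comm]

lemma corner_transpose (i j : ℕ) (hi : i ≤ 6) (hj : j ≤ 6) (x : Matrix (Fin 6) (Fin 6) 𝕂) :
    corner i j hi hj xᵀ = (corner j i hj hi x)ᵀ := by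
  ext a b; rfl

lemma det_zero_of_row_dep {x : Matrix (Fin 6) (Fin 6) 𝕂} (hdet : IsUnit x.det)
    (u : Fin 2 → 𝕂) (hu : u ≠ 0)
    (h : ∀ k : Fin 6, u 0 * x 4 k + u 1 * x 5 k = 0) : False := by
  have hex : ∃ η, η ≠ 0 ∧ Matrix.vecMul η x = 0 := by
    refine ⟨fun i => if i.1 = 4 then u 0 else if i.1 = 5 then u 1 else 0, ?_, ?_⟩
    · intro h0
      apply hu
      funext r
      fin_cases r
      · have := congrFun h0 4
        simpa using this
      · have := congrFun h0 5
        simpa using this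
    · funext k
      have hk := h k
      show ∑ i : Fin 6, (fun i : Fin 6 => if i.1 = 4 then u 0 else if i.1 = 5 then u 1 else 0) i
          * x i k = 0
      rw [Fin.sum_univ_six]
      norm_num [show ((0:Fin 6):ℕ) = 0 from rfl, show ((1:Fin 6):ℕ) = 1 from rfl,
        show ((2:Fin 6):ℕ) = 2 from rfl, show ((3:Fin 6):ℕ) = 3 from rfl,
        show ((4:Fin 6):ℕ) = 4 from rfl, show ((5:Fin 6):ℕ) = 5 from rfl]
      linear_combination hk
  obtain ⟨η, hη0, hη⟩ := hex
  have hz : x.det = 0 := Matrix.exists_vecMul_eq_zero_iff.mp ⟨η, hη0, hη⟩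
  rw [hz] at hdet
  simpa using hdet


lemma exists_mu {A : Matrix (Fin 2) (Fin 4) 𝕂}
    (minor : ∀ b b' : Fin 4, A 0 b * A 1 b' - A 0 b' * A 1 b = 0)
    (c' j2 : Fin 4) (hg : A 0 j2 ≠ 0 ∨ A 1 j2 ≠ 0) :
    ∃ μ : 𝕂, A 0 c' = μ * A 0 j2 ∧ A 1 c' = μ * A 1 j2 := by
  rcases hg with hg | hg
  · refine ⟨A 0 c' / A 0 j2, (div_mul_cancel₀ _ hg).symm, ?_⟩
    field_simp
    linear_combination -(minor c' j2)
  · refine ⟨A 1 c' / A 1 j2, ?_, (div_mul_cancel₀ _ hg).symm⟩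
    field_simp
    linear_combination minor c' j2

lemma pair_col {x : Matrix (Fin 6) (Fin 6) 𝕂} {h2 : (2:ℕ) ≤ 6} {h4 : (4:ℕ) ≤ 6}
    (hm : x * xLeft 𝕂 ∈ tanSet x) (u : Fin 2 → 𝕂)
    (huA : Matrix.vecMul u (corner 2 4 h2 h4 x) = 0)
    (c' j2 : Fin 4) (hcj : c' ≠ j2) (μ : 𝕂)
    (hp0 : corner 2 4 h2 h4 x 0 c' = μ * corner 2 4 h2 h4 x 0 j2)
    (hp1 : corner 2 4 h2 h4 x 1 c' = μ * corner 2 4 h2 h4 x 1 j2) :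
    u 0 * corner 2 4 h2 h4 (x * xLeft 𝕂) 0 c' + u 1 * corner 2 4 h2 h4 (x * xLeft 𝕂) 1 c'
      = μ * (u 0 * corner 2 4 h2 h4 (x * xLeft 𝕂) 0 j2
        + u 1 * corner 2 4 h2 h4 (x * xLeft 𝕂) 1 j2) := by
  classical
  set v : Fin 4 → 𝕂 := Pi.single c' (1:𝕂) - Pi.single j2 μ with hv
  have hAv : (corner 2 4 h2 h4 x).mulVec v = 0 := by
    rw [hv, Matrix.mulVec_sub, Matrix.mulVec_single, Matrix.mulVec_single]
    funext a
    fin_cases a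
    · show corner 2 4 h2 h4 x 0 c' * 1 - corner 2 4 h2 h4 x 0 j2 * μ = 0
      linear_combination hp0
    · show corner 2 4 h2 h4 x 1 c' * 1 - corner 2 4 h2 h4 x 1 j2 * μ = 0
      linear_combination hp1
  have hp := pairing hm h2 h4 (by norm_num) (by norm_num) u v huA hAv
  rw [hv, Matrix.mulVec_sub, Matrix.mulVec_single, Matrix.mulVec_single] at hp
  have hp' : u 0 * (corner 2 4 h2 h4 (x * xLeft 𝕂) 0 c' * 1
        - corner 2 4 h2 h4 (x * xLeft 𝕂) 0 j2 * μ)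
      + u 1 * (corner 2 4 h2 h4 (x * xLeft 𝕂) 1 c' * 1
        - corner 2 4 h2 h4 (x * xLeft 𝕂) 1 j2 * μ) = 0 := by
    rw [← hp]
    simp [dotProduct, Fin.sum_univ_two]
    ring
  linear_combination hp' 

set_option maxHeartbeats 1000000 in
lemma main_left {x : Matrix (Fin 6) (Fin 6) 𝕂} {h2 : (2:ℕ) ≤ 6} {h4 : (4:ℕ) ≤ 6}
    (hdet : IsUnit x.det)
    (hrk : (corner 2 4 h2 h4 x).rank ≤ 1) :
    x * xLeft 𝕂 ∉ tanSet x := by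
  intro hm
  set A := corner 2 4 h2 h4 x with hAdef
  set B := corner 2 4 h2 h4 (x * xLeft 𝕂) with hBdef
  -- all 2x2 minors of A vanish
  have minor : ∀ b b' : Fin 4, A 0 b * A 1 b' - A 0 b' * A 1 b = 0 := by
    intro b b'
    by_contra hne
    have hdet2 : IsUnit (A.submatrix (id : Fin 2 → Fin 2) ![b, b']) := by
      rw [Matrix.isUnit_iff_isUnit_det, Matrix.det_fin_two]
      simp only [Matrix.submatrix_apply, id_eq, Matrix.cons_val_zero, Matrix.cons_val_one,
        Matrix.head_cons]
      exact isUnit_iff_ne_zero.mpr (fun h0 => hne (by linear_combination h0))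
    have hle := rank_submatrix_le' A (id : Fin 2 → Fin 2) ![b, b']
    rw [Matrix.rank_of_isUnit _ hdet2] at hle
    simp only [Fintype.card_fin] at hle
    omega
  -- translation lemmas
  have hBA2 : ∀ a : Fin 2, B a 2 = A a 0 := by
    intro a
    exact mul_xLeft_apply' x ⟨4 + a.1, by omega⟩ ⟨4, by omega⟩ ⟨2, by omega⟩ rfl
  have hBA3 : ∀ a : Fin 2, B a 3 = A a 1 := by
    intro a
    exact mul_xLeft_apply' x ⟨4 + a.1, by omega⟩ ⟨5, by omega⟩ ⟨3, by omega⟩ rfl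
  have hBA : ∀ (a c : Fin 2), B a ⟨2 + c.1, by omega⟩ = A a ⟨c.1, by omega⟩ := by
    intro a c
    exact mul_xLeft_apply' x ⟨4 + a.1, by omega⟩ ⟨2 + (2 + c.1), by omega⟩ ⟨2 + c.1, by omega⟩
      (by show 2 + (2 + c.1) = 2 + c.1 + 2; omega)
  have hfinal : ∀ u : Fin 2 → 𝕂, u ≠ 0 → Matrix.vecMul u A = 0 → False := by
    intro u hu huA
    have huA' : ∀ b : Fin 4, u 0 * A 0 b + u 1 * A 1 b = 0 := by
      intro b
      have h0 := congrFun huA b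
      simpa [Matrix.vecMul, dotProduct, Fin.sum_univ_two] using h0
    have hcol : ∀ b : Fin 4, b.1 < 2 → u 0 * B 0 b + u 1 * B 1 b = 0 := by
      intro b hb
      by_cases h33 : ∀ a c' : Fin 2, A a ⟨2 + c'.1, by omega⟩ = 0
      · -- x33 = 0; first get x32 = 0 via corner (2,2)
        have hc22 : corner 2 2 h2 h2 x = 0 := by
          ext a' b'
          show x ⟨4 + a'.1, by omega⟩ ⟨4 + b'.1, by omega⟩ = 0
          have h0 := h33 a' b'
          rw [hAdef] at h0
          exact (entry_congr x rfl (show (4 + b'.1 : ℕ) = 2 + (2 + b'.1) by omega)).trans h0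
        have h32 : ∀ (a c' : Fin 2), A a ⟨c'.1, by omega⟩ = 0 := by
          intro a c'
          have hp := pairing hm h2 h2 (by norm_num) (by norm_num) (Pi.single a 1)
            (Pi.single c' 1) (by rw [hc22, Matrix.vecMul_zero]) (by rw [hc22, Matrix.zero_mulVec])
          rw [Matrix.mulVec_single_one, single_dotProduct, Matrix.col_apply] at hp
          have hcm : corner 2 2 h2 h2 (x * xLeft 𝕂) a c' = A a ⟨c'.1, by omega⟩ := by
            exact mul_xLeft_apply' x ⟨4 + a.1, by omega⟩ ⟨4 + c'.1, by omega⟩ ⟨2 + c'.1, by omega⟩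
              (by show 4 + c'.1 = 2 + c'.1 + 2; omega)
          rw [hcm] at hp
          linear_combination hp
        have hA0 : A = 0 := by
          ext a b'
          rcases lt_or_ge b'.1 2 with hb' | hb'
          · have h0 := h32 a ⟨b'.1, hb'⟩
            exact h0
          · have h0 := h33 a ⟨b'.1 - 2, by omega⟩
            rw [hAdef] at h0 ⊢
            show x _ _ = 0
            exact (entry_congr x rfl (show (2 + b'.1 : ℕ) = 2 + (2 + (b'.1 - 2)) by omega)).trans h0
        have hp := pairing hm h2 h4 (by norm_num) (by norm_num) u (Pi.single b 1)
          huA (by rw [← hAdef, hA0, Matrix.zero_mulVec])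
        rw [Matrix.mulVec_single] at hp
        have hp' : u 0 * (B 0 b * 1) + u 1 * (B 1 b * 1) = 0 := by
          have h0 : (u ⬝ᵥ fun i => B i b * 1) = u 0 * (B 0 b * 1) + u 1 * (B 1 b * 1) := by
            simp [dotProduct, Fin.sum_univ_two]
          rw [← h0]
          exact hp
        linear_combination hp'
      · -- x33 ≠ 0
        push_neg at h33
        obtain ⟨a1, c1, h331⟩ := h33
        have hg : A 0 ⟨2 + c1.1, by omega⟩ ≠ 0 ∨ A 1 ⟨2 + c1.1, by omega⟩ ≠ 0 := by
          fin_cases a1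
          · exact Or.inl h331
          · exact Or.inr h331
        obtain ⟨μ, hp0, hp1⟩ := exists_mu minor b ⟨2 + c1.1, by omega⟩ hg
        have hcj : b ≠ (⟨2 + c1.1, by omega⟩ : Fin 4) := by
          intro he
          have : b.1 = 2 + c1.1 := congrArg Fin.val he
          omega
        have hkey := pair_col hm u huA b ⟨2 + c1.1, by omega⟩ hcj μ hp0 hp1
        have e1 := hBA 0 c1
        have e2 := hBA 1 c1
        have e3 := huA' ⟨c1.1, by omega⟩
        linear_combination hkey + μ * u 0 * e1 + μ * u 1 * e2 + μ * e3
    -- final contradiction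
    refine det_zero_of_row_dep hdet u hu ?_
    intro k
    fin_cases k
    · have h0 := hcol 0 (by norm_num)
      have e0 : B 0 0 = x 4 0 := mul_xLeft_apply' x 4 2 0 (by decide)
      have e1 : B 1 0 = x 5 0 := mul_xLeft_apply' x 5 2 0 (by decide)
      rw [e0, e1] at h0
      exact h0
    · have h0 := hcol 1 (by norm_num)
      have e0 : B 0 1 = x 4 1 := mul_xLeft_apply' x 4 3 1 (by decide)
      have e1 : B 1 1 = x 5 1 := mul_xLeft_apply' x 5 3 1 (by decide)
      rw [e0, e1] at h0
      exact h0
    · exact huA' 0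
    · exact huA' 1
    · exact huA' 2
    · exact huA' 3
  -- construct u
  by_cases hrow : ∀ b : Fin 4, A 0 b = 0
  · refine hfinal ![1, 0] ?_ ?_
    · intro h0
      have := congrFun h0 0
      simp at this
    · funext b'
      have h0 := hrow b'
      show ∑ a : Fin 2, ![(1:𝕂), 0] a * A a b' = 0
      rw [Fin.sum_univ_two]
      simp [h0]
  · push_neg at hrow
    obtain ⟨b1, hb1⟩ := hrow
    refine hfinal ![A 1 b1, -A 0 b1] ?_ ?_
    · intro h0
      have := congrFun h0 1
      simp at this
      exact hb1 this
    · funext b'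
      show ∑ a : Fin 2, ![A 1 b1, -A 0 b1] a * A a b' = 0
      rw [Fin.sum_univ_two]
      simp only [Matrix.cons_val_zero, Matrix.cons_val_one, Matrix.head_cons]
      linear_combination minor b' b1

lemma main_d0 {x : Matrix (Fin 6) (Fin 6) 𝕂} {h2 : (2:ℕ) ≤ 6} {h4 : (4:ℕ) ≤ 6}
    (h22 : corner 2 2 h2 h2 x = 0) (a0 : Fin 2) (b0 : Fin 4) (hb0 : b0.1 < 2)
    (hne : corner 2 4 h2 h4 x a0 b0 ≠ 0) :
    x * xLeft 𝕂 ∉ tanSet x := by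
  intro hm
  apply hne
  have hp := pairing hm h2 h2 (by norm_num) (by norm_num) (Pi.single a0 1)
    (Pi.single (⟨b0.1, hb0⟩ : Fin 2) 1) (by rw [h22, Matrix.vecMul_zero])
    (by rw [h22, Matrix.zero_mulVec])
  rw [Matrix.mulVec_single_one, single_dotProduct, Matrix.col_apply] at hp
  have hcm : corner 2 2 h2 h2 (x * xLeft 𝕂) a0 ⟨b0.1, hb0⟩ = corner 2 4 h2 h4 x a0 b0 :=
    mul_xLeft_apply' x ⟨4 + a0.1, by omega⟩ ⟨4 + b0.1, by omega⟩ ⟨2 + b0.1, by omega⟩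
      (by show 4 + b0.1 = 2 + b0.1 + 2; omega)
  rw [hcm] at hp
  linear_combination hp

set_option maxHeartbeats 1000000 in
lemma submod {x : Matrix (Fin 6) (Fin 6) 𝕂} {h2 : (2:ℕ) ≤ 6} {h4 : (4:ℕ) ≤ 6}
    (r22 : (corner 2 2 h2 h2 x).rank ≤ 1)
    (r42 : (corner 4 2 h4 h2 x).rank = 2)
    (r24 : (corner 2 4 h2 h4 x).rank = 2)
    (r44 : (corner 4 4 h4 h4 x).rank = 2) : False := by
  obtain ⟨v, hv0, hv⟩ := exists_mulVec_zero (corner 2 2 h2 h2 x)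
    (lt_of_le_of_lt r22 (by simp))
  have hv' : ∀ r : Fin 2, corner 2 2 h2 h2 x r 0 * v 0 + corner 2 2 h2 h2 x r 1 * v 1 = 0 := by
    intro r
    have h0 := congrFun hv r
    simpa [Matrix.mulVec, dotProduct, Fin.sum_univ_two] using h0
  -- rows 2,3 of corner42 pair with v to zero
  have hr23 : ∀ r : Fin 2, corner 4 2 h4 h2 x ⟨2 + r.1, by omega⟩ 0 * v 0
      + corner 4 2 h4 h2 x ⟨2 + r.1, by omega⟩ 1 * v 1 = 0 := by
    intro r
    have he0 : corner 4 2 h4 h2 x ⟨2 + r.1, by omega⟩ 0 = corner 2 2 h2 h2 x r 0 :=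
      entry_congr x (show (2 + (2 + r.1) : ℕ) = 4 + r.1 by omega) rfl
    have he1 : corner 4 2 h4 h2 x ⟨2 + r.1, by omega⟩ 1 = corner 2 2 h2 h2 x r 1 :=
      entry_congr x (show (2 + (2 + r.1) : ℕ) = 4 + r.1 by omega) rfl
    rw [he0, he1]
    exact hv' r
  -- some row < 2 of corner42 pairs with v to nonzero
  have hex : ∃ i0 : Fin 2, corner 4 2 h4 h2 x ⟨i0.1, by omega⟩ 0 * v 0
      + corner 4 2 h4 h2 x ⟨i0.1, by omega⟩ 1 * v 1 ≠ 0 := by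
    by_contra hc
    push_neg at hc
    have hz : (corner 4 2 h4 h2 x).mulVec v = 0 := by
      funext r
      rw [show (0 : Fin 4 → 𝕂) r = 0 from rfl]
      have hexp : (corner 4 2 h4 h2 x *ᵥ v) r
          = corner 4 2 h4 h2 x r 0 * v 0 + corner 4 2 h4 h2 x r 1 * v 1 := by
        simp [Matrix.mulVec, dotProduct, Fin.sum_univ_two]
      rw [hexp]
      rcases lt_or_ge r.1 2 with hr | hr
      · exact hc ⟨r.1, hr⟩
      · have h6 := hr23 ⟨r.1 - 2, by omega⟩
        rwa [show (⟨2 + (r.1 - 2), by omega⟩ : Fin 4) = r from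
          Fin.ext (show 2 + (r.1 - 2) = r.1 by omega)] at h6
    have hlt := rank_lt_of_mulVec_zero _ hv0 hz
    rw [r42] at hlt
    simp at hlt
  obtain ⟨i0, hi0⟩ := hex
  set P := (corner 4 4 h4 h4 x).submatrix ![⟨i0.1, by omega⟩, 2, 3] id with hP
  obtain ⟨w, hw0, hw⟩ := exists_vecMul_zero P (by
    refine lt_of_le_of_lt (rank_submatrix_le' _ _ _) ?_
    rw [r44]; simp)
  have hw' : ∀ b : Fin 4, w 0 * P 0 b + w 1 * P 1 b + w 2 * P 2 b = 0 := by
    intro b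
    have h0 := congrFun hw b
    simpa [Matrix.vecMul, dotProduct, Fin.sum_univ_three] using h0
  -- P row evaluations
  have hP0 : ∀ b : Fin 4, P 0 b = corner 4 4 h4 h4 x ⟨i0.1, by omega⟩ b := by
    intro b
    show corner 4 4 h4 h4 x (![⟨i0.1, by omega⟩, 2, 3] 0) b = _
    norm_num
  have hP1 : ∀ b : Fin 4, P 1 b = corner 2 4 h2 h4 x 0 b := by
    intro b
    show corner 4 4 h4 h4 x (![⟨i0.1, by omega⟩, 2, 3] 1) b = _
    norm_num [Matrix.cons_val_one]
    rfl
  have hP2 : ∀ b : Fin 4, P 2 b = corner 2 4 h2 h4 x 1 b := by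
    intro b
    show corner 4 4 h4 h4 x (![⟨i0.1, by omega⟩, 2, 3] 2) b = _
    norm_num [Matrix.cons_val_two, Matrix.tail_cons]
    rfl
  -- w 0 ≠ 0
  have hw00 : w 0 ≠ 0 := by
    intro hz
    have hker : Matrix.vecMul ![w 1, w 2] (corner 2 4 h2 h4 x) = 0 := by
      funext b
      show ∑ a : Fin 2, ![w 1, w 2] a * corner 2 4 h2 h4 x a b = 0
      rw [Fin.sum_univ_two]
      simp only [Matrix.cons_val_zero, Matrix.cons_val_one, Matrix.head_cons]
      have := hw' b
      rw [hz, hP1 b, hP2 b] at this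
      linear_combination this
    have hne2 : (![w 1, w 2] : Fin 2 → 𝕂) ≠ 0 := by
      intro h0
      apply hw0
      funext r
      fin_cases r
      · exact hz
      · have := congrFun h0 0
        simpa using this
      · have := congrFun h0 1
        simpa using this
    have hlt := rank_lt_of_vecMul_zero _ hne2 hker
    rw [r24] at hlt
    simp at hlt
  -- column translations: corner44 (row) (2+c) = corner42 (row) c
  have hcol : ∀ (r : Fin 4) (c : Fin 2),
      corner 4 4 h4 h4 x r ⟨2 + c.1, by omega⟩ = corner 4 2 h4 h2 x r c :=
    fun r c => entry_congr x rfl (show (2 + (2 + c.1) : ℕ) = 4 + c.1 by omega)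
  -- assemble
  have hkey : w 0 * (corner 4 2 h4 h2 x ⟨i0.1, by omega⟩ 0 * v 0
      + corner 4 2 h4 h2 x ⟨i0.1, by omega⟩ 1 * v 1) = 0 := by
    have e02 : P 0 2 = corner 4 2 h4 h2 x ⟨i0.1, by omega⟩ 0 := by
      rw [hP0]; exact hcol _ 0
    have e03 : P 0 3 = corner 4 2 h4 h2 x ⟨i0.1, by omega⟩ 1 := by
      rw [hP0]; exact hcol _ 1
    have e12 : P 1 2 = corner 4 2 h4 h2 x 2 0 := by
      rw [hP1]; exact hcol 2 0
    have e13 : P 1 3 = corner 4 2 h4 h2 x 2 1 := by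
      rw [hP1]; exact hcol 2 1
    have e22 : P 2 2 = corner 4 2 h4 h2 x 3 0 := by
      rw [hP2]; exact hcol 3 0
    have e23 : P 2 3 = corner 4 2 h4 h2 x 3 1 := by
      rw [hP2]; exact hcol 3 1
    have hr0 := hr23 0
    have hr1 := hr23 1
    have hb2 := hw' 2
    have hb3 := hw' 3
    rw [e02, e12, e22] at hb2
    rw [e03, e13, e23] at hb3
    -- hr0 is about index ⟨2+0⟩ = 2, hr1 about ⟨2+1⟩ = 3
    have hr0' : corner 4 2 h4 h2 x 2 0 * v 0 + corner 4 2 h4 h2 x 2 1 * v 1 = 0 := hr0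
    have hr1' : corner 4 2 h4 h2 x 3 0 * v 0 + corner 4 2 h4 h2 x 3 1 * v 1 = 0 := hr1
    linear_combination v 0 * hb2 + v 1 * hb3 - w 1 * hr0' - w 2 * hr1'
  rcases mul_eq_zero.mp hkey with h | h
  · exact hw00 h
  · exact hi0 h

def e4 : (Fin 2 ⊕ Fin 2) ≃ Fin 4 where
  toFun := Sum.elim (fun a => ⟨a.1, by omega⟩) (fun a => ⟨2 + a.1, by omega⟩)
  invFun := fun k => if h : k.1 < 2 then Sum.inl ⟨k.1, h⟩ else Sum.inr ⟨k.1 - 2, by omega⟩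
  left_inv := by rintro (a | a) <;> fin_cases a <;> rfl
  right_inv := by intro k; fin_cases k <;> rfl

def e6 : ((Fin 2 ⊕ Fin 2) ⊕ Fin 2) ≃ Fin 6 where
  toFun := Sum.elim (Sum.elim (fun a => ⟨a.1, by omega⟩) (fun a => ⟨2 + a.1, by omega⟩))
    (fun a => ⟨4 + a.1, by omega⟩)
  invFun := fun k => if h : k.1 < 2 then Sum.inl (Sum.inl ⟨k.1, h⟩)
    else if h' : k.1 < 4 then Sum.inl (Sum.inr ⟨k.1 - 2, by omega⟩)
    else Sum.inr ⟨k.1 - 4, by omega⟩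
  left_inv := by rintro ((a | a) | a) <;> fin_cases a <;> rfl
  right_inv := by intro k; fin_cases k <;> rfl

lemma vecMul_stack (a b : Fin 2 → 𝕂) (A B : Matrix (Fin 2) (Fin 2) 𝕂) :
    Matrix.vecMul (Sum.elim a b) (Matrix.of (Sum.elim (fun r c => A r c) (fun r c => B r c)))
      = Matrix.vecMul a A + Matrix.vecMul b B := by
  funext c
  simp [Matrix.vecMul, dotProduct, Fintype.sum_sum_type]

lemma sum_elim_zero' {α β : Type*} : (Sum.elim (0 : α → 𝕂) (0 : β → 𝕂)) = 0 := by
  funext r; rcases r with r | r <;> rfl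

lemma sum_elim_add {α β : Type*} (f f' : α → 𝕂) (g g' : β → 𝕂) :
    Sum.elim f g + Sum.elim f' g' = Sum.elim (f + f') (g + g') := by
  funext r; rcases r with r | r <;> rfl

lemma vecMul_wide (w : Fin 2 → 𝕂) (A B : Matrix (Fin 2) (Fin 2) 𝕂) :
    Matrix.vecMul w (Matrix.of fun (r : Fin 2) => Sum.elim (fun b => A r b) (fun b => B r b))
      = Sum.elim (Matrix.vecMul w A) (Matrix.vecMul w B) := by
  funext c
  rcases c with c | c <;> simp [Matrix.vecMul, dotProduct]

lemma sum_elim_zero : (Sum.elim (0 : Fin 2 → 𝕂) (0 : Fin 2 → 𝕂)) = 0 := by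
  funext r; rcases r with r | r <;> rfl

set_option maxHeartbeats 4000000 in
lemma main_2222 {x : Matrix (Fin 6) (Fin 6) 𝕂} {h2 : (2:ℕ) ≤ 6} {h4 : (4:ℕ) ≤ 6}
    (hdet : IsUnit x.det)
    (r44 : (corner 4 4 h4 h4 x).rank = 2)
    (r22 : (corner 2 2 h2 h2 x).rank = 2) :
    x * xLeft 𝕂 ∉ tanSet x := by
  intro hm
  set x11 : Matrix (Fin 2) (Fin 2) 𝕂 :=
    Matrix.of fun a b => x ⟨a.1, by omega⟩ ⟨b.1, by omega⟩ with hx11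
  set x12 : Matrix (Fin 2) (Fin 2) 𝕂 :=
    Matrix.of fun a b => x ⟨a.1, by omega⟩ ⟨2 + b.1, by omega⟩ with hx12
  set x13 : Matrix (Fin 2) (Fin 2) 𝕂 :=
    Matrix.of fun a b => x ⟨a.1, by omega⟩ ⟨4 + b.1, by omega⟩ with hx13
  set x21 : Matrix (Fin 2) (Fin 2) 𝕂 :=
    Matrix.of fun a b => x ⟨2 + a.1, by omega⟩ ⟨b.1, by omega⟩ with hx21
  set x22 : Matrix (Fin 2) (Fin 2) 𝕂 :=
    Matrix.of fun a b => x ⟨2 + a.1, by omega⟩ ⟨2 + b.1, by omega⟩ with hx22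
  set x23 : Matrix (Fin 2) (Fin 2) 𝕂 :=
    Matrix.of fun a b => x ⟨2 + a.1, by omega⟩ ⟨4 + b.1, by omega⟩ with hx23
  set x31 : Matrix (Fin 2) (Fin 2) 𝕂 :=
    Matrix.of fun a b => x ⟨4 + a.1, by omega⟩ ⟨b.1, by omega⟩ with hx31
  set x32 : Matrix (Fin 2) (Fin 2) 𝕂 :=
    Matrix.of fun a b => x ⟨4 + a.1, by omega⟩ ⟨2 + b.1, by omega⟩ with hx32
  set x33 : Matrix (Fin 2) (Fin 2) 𝕂 :=
    Matrix.of fun a b => x ⟨4 + a.1, by omega⟩ ⟨4 + b.1, by omega⟩ with hx33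
  have hd33 : IsUnit x33.det := by
    by_contra hni
    have hz : x33.det = 0 := by
      by_contra hz0
      exact hni (isUnit_iff_ne_zero.mpr hz0)
    obtain ⟨v, hv0, hv⟩ := (Matrix.exists_mulVec_eq_zero_iff).mpr hz
    have hlt := rank_lt_of_mulVec_zero x33 hv0 hv
    have he : x33 = corner 2 2 h2 h2 x := rfl
    rw [he, r22] at hlt
    simp at hlt
  set y := x33⁻¹ with hyd
  have hy1 : x33 * y = 1 := Matrix.mul_nonsing_inv _ hd33
  have hy2 : y * x33 = 1 := Matrix.nonsing_inv_mul _ hd33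
  set X4 := Matrix.fromBlocks x22 x23 x32 x33 with hX4def
  have hX4 : corner 4 4 h4 h4 x = X4.submatrix e4.symm e4.symm := by
    ext a b
    fin_cases a <;> fin_cases b <;> rfl
  -- Schur complement vanishes
  have hS : x22 = x23 * (y * x32) := by
    by_contra hSne
    have hex : ∃ i j : Fin 2, (x22 - x23 * (y * x32)) i j ≠ 0 := by
      by_contra hall
      push_neg at hall
      apply hSne
      have h0 : x22 - x23 * (y * x32) = 0 := by
        ext i j
        exact hall i j
      exact sub_eq_zero.mp h0
    obtain ⟨i, j, hij⟩ := hex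
    set N := Matrix.fromBlocks (x22 - x23 * (y * x32)) x23 0 x33 with hNdef
    have hN : X4 * Matrix.fromBlocks 1 0 (-(y * x32)) 1 = N := by
      rw [hX4def, Matrix.fromBlocks_multiply, hNdef]
      have b11 : x22 * 1 + x23 * -(y * x32) = x22 - x23 * (y * x32) := by
        rw [Matrix.mul_one, Matrix.mul_neg, sub_eq_add_neg]
      have b12 : x22 * 0 + x23 * 1 = x23 := by rw [Matrix.mul_zero, Matrix.mul_one, zero_add]
      have b21 : x32 * 1 + x33 * -(y * x32) = 0 := by
        rw [Matrix.mul_one, Matrix.mul_neg, ← Matrix.mul_assoc, hy1, Matrix.one_mul,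
          add_neg_cancel]
      have b22 : x32 * 0 + x33 * 1 = x33 := by rw [Matrix.mul_zero, Matrix.mul_one, zero_add]
      rw [b11, b12, b21, b22]
    have hrN : N.rank ≤ 2 := by
      rw [← hN]
      calc (X4 * Matrix.fromBlocks 1 0 (-(y * x32)) 1).rank ≤ X4.rank :=
            Matrix.rank_mul_le_left _ _
        _ = (corner 4 4 h4 h4 x).rank := by rw [hX4, Matrix.rank_submatrix]
        _ = 2 := r44
    set T := N.submatrix (![Sum.inl i, Sum.inr 0, Sum.inr 1] : Fin 3 → (Fin 2 ⊕ Fin 2))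
      (![Sum.inl j, Sum.inr 0, Sum.inr 1] : Fin 3 → (Fin 2 ⊕ Fin 2)) with hTdef
    have hTdet : T.det = (x22 - x23 * (y * x32)) i j * x33.det := by
      rw [hTdef, Matrix.det_fin_three, Matrix.det_fin_two]
      simp only [Matrix.submatrix_apply, Matrix.cons_val_zero, Matrix.cons_val_one,
        Matrix.head_cons, Matrix.cons_val_two, Matrix.tail_cons, hNdef,
        Matrix.fromBlocks_apply₁₁, Matrix.fromBlocks_apply₁₂, Matrix.fromBlocks_apply₂₁,
        Matrix.fromBlocks_apply₂₂, Matrix.zero_apply]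
      ring
    have hTu : IsUnit T.det := by
      rw [hTdet]
      exact (isUnit_iff_ne_zero.mpr hij).mul hd33
    have h3 := rank_submatrix_le' N (![Sum.inl i, Sum.inr 0, Sum.inr 1] : Fin 3 → (Fin 2 ⊕ Fin 2))
      (![Sum.inl j, Sum.inr 0, Sum.inr 1] : Fin 3 → (Fin 2 ⊕ Fin 2))
    rw [Matrix.rank_of_isUnit T ((Matrix.isUnit_iff_isUnit_det T).mpr hTu)] at h3
    simp only [Fintype.card_fin] at h3
    omega
  -- the matrix M
  set M := x21 - x23 * (y * x31) with hMdef
  have hM : M ≠ 0 := by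
    intro hM0
    set u1 : Fin 2 → 𝕂 := Pi.single 0 1 with hu1
    set wu : Fin 2 → 𝕂 := -(Matrix.vecMul u1 (x23 * y)) with hwu
    set X6 := Matrix.fromBlocks (Matrix.fromBlocks x11 x12 x21 x22)
      (Matrix.of (Sum.elim (fun r c => x13 r c) (fun r c => x23 r c)))
      (Matrix.of fun (r : Fin 2) => Sum.elim (fun b => x31 r b) (fun b => x32 r b))
      x33 with hX6def
    have hX6 : x = X6.submatrix e6.symm e6.symm := by
      ext i' j'
      fin_cases i' <;> fin_cases j' <;> rfl
    set E : ((Fin 2 ⊕ Fin 2) ⊕ Fin 2) → 𝕂 := Sum.elim (Sum.elim 0 u1) wu with hE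
    have c11 : Matrix.vecMul u1 x21 + Matrix.vecMul wu x31 = 0 := by
      rw [hwu, Matrix.neg_vecMul, Matrix.vecMul_vecMul, Matrix.mul_assoc, ← sub_eq_add_neg,
        ← Matrix.vecMul_sub, ← hMdef, hM0, Matrix.vecMul_zero]
    have c12 : Matrix.vecMul u1 x22 + Matrix.vecMul wu x32 = 0 := by
      rw [hwu, Matrix.neg_vecMul, Matrix.vecMul_vecMul, Matrix.mul_assoc, ← sub_eq_add_neg,
        ← Matrix.vecMul_sub, sub_eq_zero.mpr hS, Matrix.vecMul_zero]
    have c13 : Matrix.vecMul u1 x23 + Matrix.vecMul wu x33 = 0 := by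
      rw [hwu, Matrix.neg_vecMul, Matrix.vecMul_vecMul, Matrix.mul_assoc, hy2, Matrix.mul_one,
        ← sub_eq_add_neg, sub_self]
    have hmain : Matrix.vecMul E X6 = 0 := by
      rw [hE, hX6def, Matrix.vecMul_fromBlocks]
      simp only [Sum.elim_comp_inl, Sum.elim_comp_inr]
      rw [Matrix.vecMul_fromBlocks]
      simp only [Sum.elim_comp_inl, Sum.elim_comp_inr]
      rw [vecMul_wide, vecMul_stack]
      simp only [Matrix.zero_vecMul, zero_add]
      rw [sum_elim_add, c11, c12, sum_elim_zero, c13]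
      exact sum_elim_zero'
    have hvm : Matrix.vecMul (E ∘ ⇑e6.symm) x = 0 := by
      rw [hX6, Matrix.submatrix_vecMul_equiv]
      have hcomp : (E ∘ ⇑e6.symm) ∘ ⇑e6.symm.symm = E := by
        funext r
        simp
      rw [hcomp, hmain]
      funext k
      rfl
    have hη : (E ∘ ⇑e6.symm) ≠ 0 := by
      intro h0
      have h1 := congrFun h0 2
      have h2' : E (Sum.inl (Sum.inr 0)) = 0 := h1
      rw [hE] at h2'
      simp only [Sum.elim_inl, Sum.elim_inr, hu1] at h2'
      rw [Pi.single_eq_same] at h2'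
      exact one_ne_zero h2'
    have hz : x.det = 0 := Matrix.exists_vecMul_eq_zero_iff.mp ⟨E ∘ ⇑e6.symm, hη, hvm⟩
    rw [hz] at hdet
    simp at hdet
  -- pick a nonzero entry of M
  have hexM : ∃ i j : Fin 2, M i j ≠ 0 := by
    by_contra hall
    push_neg at hall
    apply hM
    ext i j
    exact hall i j
  obtain ⟨i, j, hij⟩ := hexM
  set u1 : Fin 2 → 𝕂 := Pi.single i 1 with hu1
  set wu : Fin 2 → 𝕂 := -(Matrix.vecMul u1 (x23 * y)) with hwu
  set v1 : Fin 2 → 𝕂 := Pi.single j 1 with hv1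
  set zv : Fin 2 → 𝕂 := -((y * x32) *ᵥ v1) with hzv
  set u4 : Fin 4 → 𝕂 := (Sum.elim u1 wu) ∘ ⇑e4.symm with hu4d
  set v4 : Fin 4 → 𝕂 := (Sum.elim v1 zv) ∘ ⇑e4.symm with hv4d
  have hcompu : (Sum.elim u1 wu ∘ ⇑e4.symm) ∘ ⇑e4.symm.symm = Sum.elim u1 wu := by
    funext r
    simp
  have hcompv : (Sum.elim v1 zv ∘ ⇑e4.symm) ∘ ⇑e4.symm.symm = Sum.elim v1 zv := by
    funext r
    simp
  have hu4 : Matrix.vecMul u4 (corner 4 4 h4 h4 x) = 0 := by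
    rw [hX4, Matrix.submatrix_vecMul_equiv, hu4d, hcompu, hX4def, Matrix.vecMul_fromBlocks]
    simp only [Sum.elim_comp_inl, Sum.elim_comp_inr]
    have c12 : Matrix.vecMul u1 x22 + Matrix.vecMul wu x32 = 0 := by
      rw [hwu, Matrix.neg_vecMul, Matrix.vecMul_vecMul, Matrix.mul_assoc, ← sub_eq_add_neg,
        ← Matrix.vecMul_sub, sub_eq_zero.mpr hS, Matrix.vecMul_zero]
    have c13 : Matrix.vecMul u1 x23 + Matrix.vecMul wu x33 = 0 := by
      rw [hwu, Matrix.neg_vecMul, Matrix.vecMul_vecMul, Matrix.mul_assoc, hy2, Matrix.mul_one,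
        ← sub_eq_add_neg, sub_self]
    rw [c12, c13]
    funext k
    rw [sum_elim_zero']
    rfl
  have hv4 : (corner 4 4 h4 h4 x) *ᵥ v4 = 0 := by
    rw [hX4, Matrix.submatrix_mulVec_equiv, hv4d, hcompv, hX4def, Matrix.fromBlocks_mulVec]
    simp only [Sum.elim_comp_inl, Sum.elim_comp_inr]
    have d1 : x22 *ᵥ v1 + x23 *ᵥ zv = 0 := by
      rw [hzv, Matrix.mulVec_neg, Matrix.mulVec_mulVec, ← sub_eq_add_neg, ← Matrix.sub_mulVec,
        sub_eq_zero.mpr hS, Matrix.zero_mulVec]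
    have d2 : x32 *ᵥ v1 + x33 *ᵥ zv = 0 := by
      rw [hzv, Matrix.mulVec_neg, Matrix.mulVec_mulVec, ← Matrix.mul_assoc, hy1, Matrix.one_mul,
        ← sub_eq_add_neg, sub_self]
    rw [d1, d2]
    funext k
    rw [sum_elim_zero']
    rfl
  have hp := pairing hm h4 h4 (by norm_num) (by norm_num) u4 v4 hu4 hv4
  set X4' := Matrix.fromBlocks x21 x22 x31 x32 with hX4'def
  have hXm : corner 4 4 h4 h4 (x * xLeft 𝕂) = X4'.submatrix e4.symm e4.symm := by
    ext a b
    fin_cases a <;> fin_cases b <;> exact mul_xLeft_apply' x _ _ _ rfl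
  rw [hXm, Matrix.submatrix_mulVec_equiv, hv4d, hcompv] at hp
  have hdpe : u4 ⬝ᵥ ((X4' *ᵥ Sum.elim v1 zv) ∘ ⇑e4.symm) = Sum.elim u1 wu ⬝ᵥ (X4' *ᵥ Sum.elim v1 zv) := by
    rw [hu4d]
    show ∑ k : Fin 4, Sum.elim u1 wu (e4.symm k) * (X4' *ᵥ Sum.elim v1 zv) (e4.symm k) = _
    rw [Equiv.sum_comp e4.symm (fun r => Sum.elim u1 wu r * (X4' *ᵥ Sum.elim v1 zv) r)]
    rfl
  rw [hdpe, hX4'def, Matrix.fromBlocks_mulVec] at hp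
  simp only [Sum.elim_comp_inl, Sum.elim_comp_inr] at hp
  rw [sumElim_dotProduct_sumElim] at hp
  -- hp : u1 ⬝ᵥ (x21 *ᵥ v1 + x22 *ᵥ zv) + wu ⬝ᵥ (x31 *ᵥ v1 + x32 *ᵥ zv) = 0
  apply hij
  have hgoal : u1 ⬝ᵥ (M *ᵥ v1) = M i j := by
    rw [hv1, Matrix.mulVec_single, hu1, single_dotProduct]
    simp
  rw [← hgoal]
  -- transform hp
  rw [dotProduct_add, dotProduct_add] at hp
  have t2 : u1 ⬝ᵥ (x22 *ᵥ zv) = -(u1 ⬝ᵥ ((x22 * (y * x32)) *ᵥ v1)) := by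
    rw [hzv, Matrix.mulVec_neg, Matrix.mulVec_mulVec, dotProduct_neg]
  have t3 : wu ⬝ᵥ (x31 *ᵥ v1) = -(u1 ⬝ᵥ (((x23 * y) * x31) *ᵥ v1)) := by
    rw [hwu, neg_dotProduct, dotProduct_mulVec, Matrix.vecMul_vecMul,
      ← dotProduct_mulVec]
  have t4 : wu ⬝ᵥ (x32 *ᵥ zv) = u1 ⬝ᵥ (((x23 * y) * (x32 * (y * x32))) *ᵥ v1) := by
    rw [hzv, hwu, Matrix.mulVec_neg, neg_dotProduct, dotProduct_neg, neg_neg,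
      Matrix.mulVec_mulVec, dotProduct_mulVec, Matrix.vecMul_vecMul,
      ← dotProduct_mulVec]
  rw [t2, t3, t4] at hp
  have hMM : x21 - x22 * (y * x32) - (x23 * y) * x31 + (x23 * y) * (x32 * (y * x32)) = M := by
    rw [hS, hMdef]
    simp only [Matrix.mul_assoc]
    abel
  rw [← hMM]
  rw [Matrix.add_mulVec, Matrix.sub_mulVec, Matrix.sub_mulVec, dotProduct_add,
    dotProduct_sub, dotProduct_sub]
  linear_combination hp

lemma eq_zero_of_rank_eq_zero {m n : Type*} [Fintype m] [Fintype n] [DecidableEq n]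
    (A : Matrix m n 𝕂) (h : A.rank = 0) : A = 0 := by
  have hr : LinearMap.range A.mulVecLin = ⊥ := by
    rw [Matrix.rank] at h
    exact Submodule.finrank_eq_zero.mp h
  ext i j
  have hz : A.mulVec (Pi.single j 1) = 0 := by
    have hmem : A.mulVecLin (Pi.single j 1) ∈ LinearMap.range A.mulVecLin := ⟨_, rfl⟩
    rw [hr] at hmem
    simpa using hmem
  rw [Matrix.mulVec_single] at hz
  have h3 := congrFun hz i
  simpa using h3

lemma main_right {x : Matrix (Fin 6) (Fin 6) 𝕂} {h2 : (2:ℕ) ≤ 6} {h4 : (4:ℕ) ≤ 6}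
    (hdet : IsUnit x.det)
    (hrk : (corner 4 2 h4 h2 x).rank ≤ 1) :
    xRight 𝕂 * x ∉ tanSet x := by
  intro hmem
  have h1 := right_to_left hmem
  have e24 : (corner 2 4 h2 h4 xᵀ).rank ≤ 1 := by
    rw [corner_transpose, Matrix.rank_transpose]
    exact hrk
  exact main_left (by rw [Matrix.det_transpose]; exact hdet) e24 h1

lemma mk2 {R : Matrix (Fin 2) (Fin 2) ℕ} {a b c d : ℕ}
    (h00 : R 0 0 = a) (h01 : R 0 1 = b) (h10 : R 1 0 = c) (h11 : R 1 1 = d) :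
    R = !![a, b; c, d] := by
  ext i j
  fin_cases i <;> fin_cases j <;> simp [h00, h01, h10, h11]


end Aux

set_option maxHeartbeats 1000000 in
/-- If the rank matrix `R` is not one of the four exceptional matrices, then either
`x·x_left ∉ Lie(P)·x + x·Lie(P)^τ` for every `x ∈ GL₆(𝕂)` with `R(x) = R`, or
`x_right·x ∉ Lie(P)·x + x·Lie(P)^τ` for every such `x`. -/
theorem transversal_of_not_exceptional {𝕂 : Type*} [RCLike 𝕂]
    (R : Matrix (Fin 2) (Fin 2) ℕ)
    (h1 : R ≠ !![4, 2; 2, 2]) (h2 : R ≠ !![4, 2; 2, 1])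
    (h3 : R ≠ !![3, 2; 2, 2]) (h4 : R ≠ !![3, 2; 2, 1]) :
    (∀ x : Matrix (Fin 6) (Fin 6) 𝕂, IsUnit x.det → rankMatrix x = R →
        x * xLeft 𝕂 ∉ tanSet x) ∨
    (∀ x : Matrix (Fin 6) (Fin 6) 𝕂, IsUnit x.det → rankMatrix x = R →
        xRight 𝕂 * x ∉ tanSet x) := by
  by_cases hc : R 1 0 ≤ 1
  · left
    intro x hdet hr
    have e10 : (corner 2 4 (by norm_num) (by norm_num) x).rank = R 1 0 := by
      have h0 := congrFun (congrFun hr 1) 0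
      simpa [rankMatrix] using h0
    exact main_left hdet (le_trans (le_of_eq e10) hc)
  · by_cases hb : R 0 1 ≤ 1
    · right
      intro x hdet hr
      have e01 : (corner 4 2 (by norm_num) (by norm_num) x).rank = R 0 1 := by
        have h0 := congrFun (congrFun hr 0) 1
        simpa [rankMatrix] using h0
      exact main_right hdet (le_trans (le_of_eq e01) hb)
    · left
      intro x hdet hr
      push_neg at hc hb
      have e00 : (corner 4 4 (by norm_num) (by norm_num) x).rank = R 0 0 := by
        have h0 := congrFun (congrFun hr 0) 0
        simpa [rankMatrix] using h0
      have e01 : (corner 4 2 (by norm_num) (by norm_num) x).rank = R 0 1 := by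
        have h0 := congrFun (congrFun hr 0) 1
        simpa [rankMatrix] using h0
      have e10 : (corner 2 4 (by norm_num) (by norm_num) x).rank = R 1 0 := by
        have h0 := congrFun (congrFun hr 1) 0
        simpa [rankMatrix] using h0
      have e11 : (corner 2 2 (by norm_num) (by norm_num) x).rank = R 1 1 := by
        have h0 := congrFun (congrFun hr 1) 1
        simpa [rankMatrix] using h0
      have hc2 : R 1 0 = 2 := by
        have hle : (corner 2 4 (by norm_num : (2:ℕ) ≤ 6) (by norm_num : (4:ℕ) ≤ 6) x).rank ≤ 2 := by
          refine le_trans (Matrix.rank_le_card_height _) ?_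
          simp
        omega
      have hb2 : R 0 1 = 2 := by
        have hle : (corner 4 2 (by norm_num : (4:ℕ) ≤ 6) (by norm_num : (2:ℕ) ≤ 6) x).rank ≤ 2 := by
          refine le_trans (Matrix.rank_le_card_width _) ?_
          simp
        omega
      have hd2 : R 1 1 ≤ 2 := by
        have hle : (corner 2 2 (by norm_num : (2:ℕ) ≤ 6) (by norm_num : (2:ℕ) ≤ 6) x).rank ≤ 2 := by
          refine le_trans (Matrix.rank_le_card_width _) ?_
          simp
        omega
      have hab : R 0 1 ≤ R 0 0 := by
        have hsub : corner 4 2 (by norm_num : (4:ℕ) ≤ 6) (by norm_num : (2:ℕ) ≤ 6) x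
            = (corner 4 4 (by norm_num) (by norm_num) x).submatrix id
              (fun b : Fin 2 => (⟨2 + b.1, by omega⟩ : Fin 4)) := by
          ext a b
          exact entry_congr x rfl (show (4 + b.1 : ℕ) = 2 + (2 + b.1) by omega)
        rw [← e00, ← e01, hsub]
        exact rank_submatrix_le' _ _ _
      rcases Nat.lt_or_ge (R 1 1) 1 with hd0 | hd1
      · -- d = 0
        have h220 : (corner 2 2 (by norm_num : (2:ℕ) ≤ 6) (by norm_num : (2:ℕ) ≤ 6) x).rank = 0 := by
          omega
        have hz := eq_zero_of_rank_eq_zero _ h220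
        have hne : ∃ (a : Fin 2) (b : Fin 4), b.1 < 2 ∧
            corner 2 4 (by norm_num : (2:ℕ) ≤ 6) (by norm_num : (4:ℕ) ≤ 6) x a b ≠ 0 := by
          by_contra hall
          push_neg at hall
          have hzero : corner 2 4 (by norm_num : (2:ℕ) ≤ 6) (by norm_num : (4:ℕ) ≤ 6) x = 0 := by
            ext a b
            rcases Nat.lt_or_ge b.1 2 with hbb | hbb
            · exact hall a b hbb
            · have hzz := congrFun (congrFun hz a) ⟨b.1 - 2, by omega⟩
              have he : corner 2 4 (by norm_num : (2:ℕ) ≤ 6) (by norm_num : (4:ℕ) ≤ 6) x a b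
                  = corner 2 2 (by norm_num : (2:ℕ) ≤ 6) (by norm_num : (2:ℕ) ≤ 6) x a
                    ⟨b.1 - 2, by omega⟩ :=
                entry_congr x rfl (show (2 + b.1 : ℕ) = 4 + (b.1 - 2) by omega)
              rw [he]
              exact hzz
          rw [hzero, Matrix.rank_zero] at e10
          omega
        obtain ⟨a0, b0, hb0, hne0⟩ := hne
        exact main_d0 hz a0 b0 hb0 hne0
      · -- d ∈ {1, 2}
        have ha2 : R 0 0 = 2 := by
          have ha4 : R 0 0 ≤ 4 := by
            have hle : (corner 4 4 (by norm_num : (4:ℕ) ≤ 6) (by norm_num : (4:ℕ) ≤ 6) x).rank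
                ≤ 4 := by
              refine le_trans (Matrix.rank_le_card_width _) ?_
              simp
            omega
          rcases Nat.lt_or_ge (R 1 1) 2 with hdd | hdd
          · -- d = 1
            have hR3 : R 0 0 ≠ 3 := fun h => h4 (mk2 h (by omega) (by omega) (by omega))
            have hR4 : R 0 0 ≠ 4 := fun h => h2 (mk2 h (by omega) (by omega) (by omega))
            omega
          · -- d = 2
            have hR3 : R 0 0 ≠ 3 := fun h => h3 (mk2 h (by omega) (by omega) (by omega))
            have hR4 : R 0 0 ≠ 4 := fun h => h1 (mk2 h (by omega) (by omega) (by omega))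
            omega
        rcases Nat.lt_or_ge (R 1 1) 2 with hdd | hdd
        · -- d = 1 : impossible by submodularity
          exact absurd (submod (x := x) (by omega) (by omega) (by omega) (by omega)) (fun h => h)
        · -- d = 2
          exact main_2222 hdet (by omega) (by omega)
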